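/- Any Sidon set contained in an interval of integers of length L has at most (1 + o(1))√L elements as L → ∞; in particular, for every δ > 0 there is L₀ such that for L ≥ L₀, any Sidon set in an interval of length L has at most (1 + δ)√L elements. -/

import Mathlib

noncomputable def repCount (A : Set ℤ) (n : ℤ) : ℕ :=
  {p : ℤ × ℤ | p.1 ∈ A ∧ p.2 ∈ A ∧ p.1 ≤ p.2 ∧ p.1 + p.2 = n}.ncard

def UniqueRepBasis (A : Set ℤ) : Prop := ∀ n : ℤ, repCount A n = 1

def IsSidon (S : Set ℤ) : Prop :=
  ∀ a ∈ S, ∀ b ∈ S, ∀ c ∈ S, ∀ d ∈ S, a + b = c + d → (a = c ∧ b = d) ∨ (a = d ∧ b = c)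

open Finset


lemma aux_sum_sub (u : ℕ) (E : Finset ℕ) (hE : ∀ j ∈ E, 1 ≤ j) :
    ∑ j ∈ E, (u - j) ≤ ∑ i ∈ Finset.range u, i := by
  have h1 : ∑ j ∈ E, (u - j) = ∑ j ∈ E.filter (· ≤ u), (u - j) := by
    rw [← Finset.sum_filter_add_sum_filter_not E (· ≤ u)]
    have : ∑ j ∈ E.filter (fun j => ¬ j ≤ u), (u - j) = 0 := by
      apply Finset.sum_eq_zero
      intro j hj
      simp only [Finset.mem_filter] at hj
      omega
    omega
  rw [h1]
  have h2 : ∑ j ∈ Finset.Icc 1 u, (u - j) = ∑ i ∈ Finset.range u, i := by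
    apply Finset.sum_nbij' (fun j => u - j) (fun i => u - i)
    · intro j hj; simp only [Finset.mem_Icc] at hj; simp only [Finset.mem_range]; omega
    · intro i hi; simp only [Finset.mem_range] at hi; simp only [Finset.mem_Icc]; omega
    · intro j hj; simp only [Finset.mem_Icc] at hj; omega
    · intro i hi; simp only [Finset.mem_range] at hi; omega
    · intro j hj; rfl
  rw [← h2]
  apply Finset.sum_le_sum_of_subset
  intro j hj
  simp only [Finset.mem_filter] at hj
  simp only [Finset.mem_Icc]
  exact ⟨hE j hj.1, hj.2⟩

lemma key_ineq (T : Finset ℤ) (a : ℤ) (L u : ℕ) (hu : 0 < u)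
    (hT : ∀ x ∈ T, a ≤ x ∧ x ≤ a + L)
    (hinj : ∀ p ∈ T.offDiag, ∀ q ∈ T.offDiag, p.2 - p.1 = q.2 - q.1 → p = q) :
    ((T.card : ℝ)) ^ 2 * (u : ℝ) ≤ ((L : ℝ) + u) * ((u : ℝ) + T.card) := by
  classical
  have cardW : (Finset.Icc (a - u + 1) (a + L)).card = L + u := by
    rw [Int.card_Icc]; omega
  -- Step A : total count over windows
  have stepA : ∑ t ∈ Finset.Icc (a - u + 1) (a + L),
      (T.filter (fun x => t ≤ x ∧ x < t + u)).card = T.card * u := by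
    have e1 : ∀ t : ℤ, (T.filter (fun x => t ≤ x ∧ x < t + u)).card
        = ∑ x ∈ T, if t ≤ x ∧ x < t + u then 1 else 0 := fun t => Finset.card_filter _ _
    calc ∑ t ∈ Finset.Icc (a - u + 1) (a + L), (T.filter (fun x => t ≤ x ∧ x < t + u)).card
        = ∑ t ∈ Finset.Icc (a - u + 1) (a + L), ∑ x ∈ T, if t ≤ x ∧ x < t + u then 1 else 0 := by
          exact Finset.sum_congr rfl (fun t _ => e1 t)
      _ = ∑ x ∈ T, ∑ t ∈ Finset.Icc (a - u + 1) (a + L), if t ≤ x ∧ x < t + u then 1 else 0 :=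
          Finset.sum_comm
      _ = ∑ _x ∈ T, u := by
          apply Finset.sum_congr rfl
          intro x hx
          obtain ⟨h1, h2⟩ := hT x hx
          rw [← Finset.card_filter]
          have e2 : (Finset.Icc (a - u + 1) (a + L)).filter (fun t => t ≤ x ∧ x < t + u)
              = Finset.Icc (x - u + 1) x := by
            ext t
            simp only [Finset.mem_filter, Finset.mem_Icc]
            omega
          rw [e2, Int.card_Icc]
          omega
      _ = T.card * u := by rw [Finset.sum_const, smul_eq_mul]
  -- Step B : sum of squares bound
  have stepB : ∑ t ∈ Finset.Icc (a - u + 1) (a + L),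
      (T.filter (fun x => t ≤ x ∧ x < t + u)).card * (T.filter (fun x => t ≤ x ∧ x < t + u)).card
      ≤ u * u + T.card * u := by
    have hsplit : ∀ t : ℤ,
        (T.filter (fun x => t ≤ x ∧ x < t + u)).card * (T.filter (fun x => t ≤ x ∧ x < t + u)).card
        = (T.filter (fun x => t ≤ x ∧ x < t + u)).offDiag.card
          + (T.filter (fun x => t ≤ x ∧ x < t + u)).card := by
      intro t
      rw [Finset.offDiag_card]
      have hm : (T.filter (fun x => t ≤ x ∧ x < t + u)).card
          ≤ (T.filter (fun x => t ≤ x ∧ x < t + u)).card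
            * (T.filter (fun x => t ≤ x ∧ x < t + u)).card := by nlinarith
      omega
    have hoff : ∑ t ∈ Finset.Icc (a - u + 1) (a + L),
        (T.filter (fun x => t ≤ x ∧ x < t + u)).offDiag.card ≤ u * u - u := by
      -- offDiag of filtered set = filtered offDiag
      have e3 : ∀ t : ℤ, (T.filter (fun x => t ≤ x ∧ x < t + u)).offDiag
          = T.offDiag.filter (fun p => (t ≤ p.1 ∧ p.1 < t + u) ∧ (t ≤ p.2 ∧ p.2 < t + u)) := by
        intro t
        ext p
        simp only [Finset.mem_offDiag, Finset.mem_filter]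
        tauto
      calc ∑ t ∈ Finset.Icc (a - u + 1) (a + L), (T.filter (fun x => t ≤ x ∧ x < t + u)).offDiag.card
          = ∑ t ∈ Finset.Icc (a - u + 1) (a + L), ∑ p ∈ T.offDiag,
              if (t ≤ p.1 ∧ p.1 < t + u) ∧ (t ≤ p.2 ∧ p.2 < t + u) then 1 else 0 := by
            apply Finset.sum_congr rfl
            intro t _
            rw [e3 t, Finset.card_filter]
        _ = ∑ p ∈ T.offDiag, ∑ t ∈ Finset.Icc (a - u + 1) (a + L),
              if (t ≤ p.1 ∧ p.1 < t + u) ∧ (t ≤ p.2 ∧ p.2 < t + u) then 1 else 0 :=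
            Finset.sum_comm
        _ = ∑ p ∈ T.offDiag, (u - (p.2 - p.1).natAbs) := by
            apply Finset.sum_congr rfl
            intro p hp
            rw [Finset.mem_offDiag] at hp
            obtain ⟨hp1, hp2, hp3⟩ := hp
            obtain ⟨ha1, ha2⟩ := hT p.1 hp1
            obtain ⟨hb1, hb2⟩ := hT p.2 hp2
            rw [← Finset.card_filter]
            have e4 : (Finset.Icc (a - u + 1) (a + L)).filter
                (fun t => (t ≤ p.1 ∧ p.1 < t + u) ∧ (t ≤ p.2 ∧ p.2 < t + u))
                = Finset.Icc (max p.1 p.2 - u + 1) (min p.1 p.2) := by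
              ext t
              simp only [Finset.mem_filter, Finset.mem_Icc, le_min_iff, max_le_iff]
              omega
            rw [e4, Int.card_Icc]
            rcases le_total p.1 p.2 with h | h <;>
              · simp only [max_eq_right, max_eq_left, min_eq_left, min_eq_right, h]
                omega
        _ ≤ u * u - u := by
            have hsum : ∑ p ∈ T.offDiag, (u - (p.2 - p.1).natAbs)
                = ∑ d ∈ T.offDiag.image (fun p => p.2 - p.1), (u - d.natAbs) :=
              (Finset.sum_image (g := fun p : ℤ × ℤ => p.2 - p.1) (f := fun d => u - d.natAbs) (fun p hp q hq h => hinj p hp q hq h)).symm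
            rw [hsum]
            set D := T.offDiag.image (fun p => p.2 - p.1) with hD
            have hD0 : ∀ d ∈ D, d ≠ 0 := by
              intro d hd
              rw [hD, Finset.mem_image] at hd
              obtain ⟨p, hp, rfl⟩ := hd
              rw [Finset.mem_offDiag] at hp
              have := hp.2.2
              omega
            rw [← Finset.sum_filter_add_sum_filter_not D (0 < ·)]
            have hpos : ∑ d ∈ D.filter (0 < ·), (u - d.natAbs) ≤ ∑ i ∈ Finset.range u, i := by
              have e5 : ∑ d ∈ D.filter (0 < ·), (u - d.natAbs)
                  = ∑ j ∈ (D.filter (0 < ·)).image Int.natAbs, (u - j) := by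
                refine (Finset.sum_image (g := Int.natAbs) (f := fun j => u - j) ?_).symm
                intro d hd e he h
                simp only [Finset.mem_coe, Finset.mem_filter] at hd he
                omega
              rw [e5]
              apply aux_sum_sub
              intro j hj
              rw [Finset.mem_image] at hj
              obtain ⟨d, hd, rfl⟩ := hj
              simp only [Finset.mem_filter] at hd
              omega
            have hneg : ∑ d ∈ D.filter (fun d => ¬ 0 < d), (u - d.natAbs)
                ≤ ∑ i ∈ Finset.range u, i := by
              have e5 : ∑ d ∈ D.filter (fun d => ¬ 0 < d), (u - d.natAbs)
                  = ∑ j ∈ (D.filter (fun d => ¬ 0 < d)).image Int.natAbs, (u - j) := by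
                refine (Finset.sum_image (g := Int.natAbs) (f := fun j => u - j) ?_).symm
                intro d hd e he h
                simp only [Finset.mem_coe, Finset.mem_filter] at hd he
                have h1 := hD0 d hd.1
                have h2 := hD0 e he.1
                omega
              rw [e5]
              apply aux_sum_sub
              intro j hj
              rw [Finset.mem_image] at hj
              obtain ⟨d, hd, rfl⟩ := hj
              simp only [Finset.mem_filter] at hd
              have := hD0 d hd.1
              omega
            have hgauss := Finset.sum_range_id_mul_two u
            have hmul : u * (u - 1) = u * u - u := by
              cases u <;> simp [Nat.succ_sub_one, Nat.succ_mul, Nat.mul_succ]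
            omega
    calc ∑ t ∈ Finset.Icc (a - u + 1) (a + L),
        (T.filter (fun x => t ≤ x ∧ x < t + u)).card * (T.filter (fun x => t ≤ x ∧ x < t + u)).card
        = ∑ t ∈ Finset.Icc (a - u + 1) (a + L),
            ((T.filter (fun x => t ≤ x ∧ x < t + u)).offDiag.card
              + (T.filter (fun x => t ≤ x ∧ x < t + u)).card) :=
          Finset.sum_congr rfl (fun t _ => hsplit t)
      _ = (∑ t ∈ Finset.Icc (a - u + 1) (a + L), (T.filter (fun x => t ≤ x ∧ x < t + u)).offDiag.card)
          + ∑ t ∈ Finset.Icc (a - u + 1) (a + L), (T.filter (fun x => t ≤ x ∧ x < t + u)).card :=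
          Finset.sum_add_distrib
      _ ≤ (u * u - u) + T.card * u := by rw [stepA]; exact Nat.add_le_add_right hoff _
      _ ≤ u * u + T.card * u := by omega
  -- Step C : Cauchy–Schwarz and conclusion
  have CS : (∑ t ∈ Finset.Icc (a - u + 1) (a + L), (T.filter (fun x => t ≤ x ∧ x < t + u)).card) ^ 2
      ≤ (Finset.Icc (a - u + 1) (a + L)).card * ∑ t ∈ Finset.Icc (a - u + 1) (a + L),
        (T.filter (fun x => t ≤ x ∧ x < t + u)).card ^ 2 :=
    sq_sum_le_card_mul_sum_sq
  rw [stepA, cardW] at CS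
  have hnat : (T.card * u) ^ 2 ≤ (L + u) * (u * u + T.card * u) := by
    refine CS.trans ?_
    apply Nat.mul_le_mul_left
    refine le_trans (le_of_eq ?_) stepB
    exact Finset.sum_congr rfl (fun t _ => sq ((T.filter (fun x => t ≤ x ∧ x < t + u)).card))
  have hreal : ((T.card : ℝ) * u) ^ 2 ≤ ((L : ℝ) + u) * ((u : ℝ) * u + (T.card : ℝ) * u) := by
    have := hnat
    push_cast at this ⊢
    exact_mod_cast this
  have hu' : (0 : ℝ) < u := by exact_mod_cast hu
  nlinarith [hreal, hu', sq_nonneg ((T.card : ℝ) - u)]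

theorem stmt_15 (δ : ℝ) (hδ : 0 < δ) :
    ∃ L₀ : ℕ, ∀ L : ℕ, L₀ ≤ L → ∀ a : ℤ, ∀ S : Set ℤ,
      IsSidon S → S ⊆ Set.Icc a (a + (L : ℤ)) →
      (S.ncard : ℝ) ≤ (1 + δ) * Real.sqrt L := by
  refine ⟨⌈(max 1 ((2 + 1/δ)/δ)) ^ 2⌉₊ + 1, ?_⟩
  intro L hL a S hSid hsub
  have hL1 : 1 ≤ L := le_trans (Nat.le_add_left 1 _) hL
  have hLR : ((max 1 ((2 + 1/δ)/δ)) : ℝ) ^ 2 < L := by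
    have h1 : ((max 1 ((2 + 1/δ)/δ)) : ℝ) ^ 2 ≤ (⌈(max 1 ((2 + 1/δ)/δ)) ^ 2⌉₊ : ℝ) :=
      Nat.le_ceil _
    have h2 : ((⌈(max 1 ((2 + 1/δ)/δ)) ^ 2⌉₊ : ℕ) : ℝ) + 1 ≤ (L : ℝ) := by
      exact_mod_cast hL
    linarith
  set s : ℝ := Real.sqrt L with hs
  have hLpos : (0 : ℝ) < L := by positivity
  have hss : s * s = L := Real.mul_self_sqrt (le_of_lt hLpos)
  have hsM : max 1 ((2 + 1/δ)/δ) < s := by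
    have h0 : (0 : ℝ) ≤ max 1 ((2 + 1/δ)/δ) := le_trans zero_le_one (le_max_left _ _)
    nlinarith [Real.sq_sqrt (le_of_lt hLpos), Real.sqrt_nonneg (L : ℝ)]
  have hs1 : 1 < s := lt_of_le_of_lt (le_max_left _ _) hsM
  have hsd : 2 + 1/δ < δ * s := by
    have := lt_of_le_of_lt (le_max_right 1 _) hsM
    rw [div_lt_iff₀ hδ] at this
    linarith [this]
  -- the finite set
  have hfin : S.Finite := (Set.finite_Icc a (a + L)).subset hsub
  have hcard : (S.ncard : ℝ) = (hfin.toFinset.card : ℝ) := by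
    rw [Set.ncard_eq_toFinset_card S hfin]
  rw [hcard]
  set T := hfin.toFinset with hTdef
  set k : ℝ := (T.card : ℝ) with hk
  have hT : ∀ x ∈ T, a ≤ x ∧ x ≤ a + L := by
    intro x hx
    rw [hTdef, Set.Finite.mem_toFinset] at hx
    have := hsub hx
    rw [Set.mem_Icc] at this
    exact this
  have hinj : ∀ p ∈ T.offDiag, ∀ q ∈ T.offDiag, p.2 - p.1 = q.2 - q.1 → p = q := by
    intro p hp q hq h
    rw [Finset.mem_offDiag] at hp hq
    have m1 : p.1 ∈ S := by rw [← Set.Finite.mem_toFinset hfin]; exact hp.1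
    have m2 : p.2 ∈ S := by rw [← Set.Finite.mem_toFinset hfin]; exact hp.2.1
    have m3 : q.1 ∈ S := by rw [← Set.Finite.mem_toFinset hfin]; exact hq.1
    have m4 : q.2 ∈ S := by rw [← Set.Finite.mem_toFinset hfin]; exact hq.2.1
    have heq : p.1 + q.2 = q.1 + p.2 := by omega
    rcases hSid p.1 m1 q.2 m4 q.1 m3 p.2 m2 heq with ⟨h1, h2⟩ | ⟨h1, h2⟩
    · exact Prod.ext h1 h2.symm
    · exact absurd h1 hp.2.2
  -- window length
  set u : ℕ := ⌈δ * L⌉₊ with hudef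
  have hupos : 0 < u := Nat.ceil_pos.2 (by positivity)
  have hu1 : δ * L ≤ (u : ℝ) := Nat.le_ceil _
  have hu2 : (u : ℝ) ≤ δ * L + 1 := le_of_lt (Nat.ceil_lt_add_one (by positivity))
  have hupos' : (0 : ℝ) < u := by exact_mod_cast hupos
  have key := key_ineq T a L u hupos hT hinj
  have hk0 : (0 : ℝ) ≤ k := Nat.cast_nonneg _
  -- derive k^2 ≤ (1+δ)L + 1 + (1+1/δ)k
  have h16 : (L : ℝ) + u ≤ (1 + δ) * L + 1 := by linarith
  have h17 : (L : ℝ) + u ≤ (1 + 1/δ) * u := by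
    have : (L : ℝ) ≤ u / δ := by
      rw [le_div_iff₀ hδ]; linarith [hu1]
    have e : (1 + 1/δ) * (u : ℝ) = u + u / δ := by field_simp
    linarith
  have h1 : k ^ 2 ≤ (1 + δ) * L + 1 + (1 + 1/δ) * k := by
    have expand : ((L : ℝ) + u) * ((u : ℝ) + k) = ((L : ℝ) + u) * u + ((L : ℝ) + u) * k := by ring
    have b1 : ((L : ℝ) + u) * u ≤ ((1 + δ) * L + 1) * u :=
      mul_le_mul_of_nonneg_right h16 (le_of_lt hupos')
    have b2 : ((L : ℝ) + u) * k ≤ (1 + 1/δ) * u * k :=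
      mul_le_mul_of_nonneg_right h17 hk0
    have : k ^ 2 * u ≤ ((1 + δ) * L + 1 + (1 + 1/δ) * k) * u := by
      calc k ^ 2 * u ≤ ((L : ℝ) + u) * ((u : ℝ) + k) := key
        _ ≤ ((1 + δ) * L + 1) * u + (1 + 1/δ) * u * k := by linarith
        _ = ((1 + δ) * L + 1 + (1 + 1/δ) * k) * u := by ring
    exact le_of_mul_le_mul_right this hupos'
  -- conclude by contradiction
  by_contra hcon
  push_neg at hcon
  have hkgt : (1 + δ) * s < k := hcon
  have kpos : 0 < k := lt_trans (by positivity) hkgt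
  have hsq : k ^ 2 = k * k := sq k
  have h1' : k * k ≤ (1 + δ) * (s * s) + 1 + (1 + 1/δ) * k := by
    rw [hss]; linarith [h1]
  have h4 : (1 + δ) * s * k < (1 + δ) * (s * s) + 1 + (1 + 1/δ) * k := by
    have hmm := mul_lt_mul_of_pos_right hkgt kpos
    linarith [hmm, h1']
  have h5 : s + 1 < (1 + δ) * s - (1 + 1/δ) := by
    have e3 : (1 + δ) * s = s + δ * s := by ring
    linarith [hsd, e3]
  have h6 : k * (s + 1) < (1 + δ) * (s * s) + 1 := by
    have hmm := mul_lt_mul_of_pos_left h5 kpos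
    have e4 : k * ((1 + δ) * s - (1 + 1/δ)) = (1 + δ) * s * k - (1 + 1/δ) * k := by ring
    linarith [hmm, h4, e4]
  have h7 : (1 + δ) * s * (s + 1) < k * (s + 1) :=
    mul_lt_mul_of_pos_right hkgt (by linarith)
  have e5 : (1 + δ) * s * (s + 1) = (1 + δ) * (s * s) + s + δ * s := by ring
  have hδs : 0 < δ * s := mul_pos hδ (lt_trans zero_lt_one hs1)
  linarith [h6, h7, e5, hδs, hs1]
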